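/- For all real σ with 1 < σ ≤ 1.01 and all real t ≥ 1, the values Σ_k(σ,t) for k = 1, 2, ..., 16 are bounded above, respectively, by: 0.10919579, 0.03040152, 0.00958566, 0.00384196, 0.00185609, 0.00102853, 0.00063099, 0.00041809, 0.00029396, 0.00021655, 0.00016557, 0.00013046, 0.00010535, 0.00008684, 0.00007282, 0.00006196. -/
import Mathlib


/-- `κ = 1/√5`. -/
noncomputable def κ : ℝ := 1 / Real.sqrt 5

/-- `σ₁(σ) = (1 + √(1 + 4σ²))/2`. -/
noncomputable def σ₁ (σ : ℝ) : ℝ := (1 + Real.sqrt (1 + 4 * σ ^ 2)) / 2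

/-- `Σ_k(σ,t)`. -/
noncomputable def Sigk (k : ℕ) (σ t : ℝ) : ℝ :=
  σ / (σ ^ 2 + k ^ 2 * t ^ 2) + (σ - 1) / ((σ - 1) ^ 2 + k ^ 2 * t ^ 2) -
    κ * σ₁ σ / ((σ₁ σ) ^ 2 + k ^ 2 * t ^ 2) -
    κ * (σ₁ σ - 1) / ((σ₁ σ - 1) ^ 2 + k ^ 2 * t ^ 2)

/-- Admissible values `𝓑_{0.01}(k)` for `k = 1, …, 16` (Table 2). -/
noncomputable def B001 : ℕ → ℝ
  | 1 => 0.10919579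
  | 2 => 0.03040152
  | 3 => 0.00958566
  | 4 => 0.00384196
  | 5 => 0.00185609
  | 6 => 0.00102853
  | 7 => 0.00063099
  | 8 => 0.00041809
  | 9 => 0.00029396
  | 10 => 0.00021655
  | 11 => 0.00016557
  | 12 => 0.00013046
  | 13 => 0.00010535
  | 14 => 0.00008684
  | 15 => 0.00007282
  | 16 => 0.00006196
  | _ => 0


set_option maxHeartbeats 4000000
section SigkAux

noncomputable def rr (σ : ℝ) : ℝ := κ * (2 * σ₁ σ - 1)

noncomputable def FF (σ D : ℝ) : ℝ :=
  (2*σ-1) * ((σ^2-σ+D)/((σ^2-σ+D)^2+D)) - rr σ * ((σ^2+D)/((σ^2+D)^2+D))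

lemma sqrt5_pos : (0:ℝ) < Real.sqrt 5 := Real.sqrt_pos.2 (by norm_num)
lemma rr_eq (σ : ℝ) : rr σ = Real.sqrt (1+4*σ^2) / Real.sqrt 5 := by
  unfold rr κ σ₁; ring
lemma rr_sq (σ : ℝ) : 5 * rr σ ^ 2 = 1 + 4 * σ ^ 2 := by
  rw [rr_eq, div_pow, Real.sq_sqrt (by positivity : (0:ℝ) ≤ 1+4*σ^2),
    Real.sq_sqrt (by norm_num : (0:ℝ) ≤ 5)]
  field_simp
lemma rr_ge_one (σ : ℝ) (hσ : 1 ≤ σ) : 1 ≤ rr σ := by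
  rw [rr_eq, le_div_iff₀ sqrt5_pos, one_mul]
  apply Real.sqrt_le_sqrt
  nlinarith
lemma r2_le : rr 1.01 ≤ 1.0080079365 := by
  have h := rr_sq 1.01
  have h1 := rr_ge_one 1.01 (by norm_num)
  nlinarith
lemma r2_ge : 1.0080079364 ≤ rr 1.01 := by
  have h := rr_sq 1.01
  have h1 := rr_ge_one 1.01 (by norm_num)
  nlinarith

lemma sigma1_sq (σ : ℝ) : (σ₁ σ)^2 = σ₁ σ + σ^2 := by
  have h : Real.sqrt (1+4*σ^2) ^ 2 = 1 + 4*σ^2 := Real.sq_sqrt (by positivity)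
  unfold σ₁
  linear_combination h/4

lemma L1 (x D : ℝ) (hD : 0 < D) :
    x/(x^2+D) + (x-1)/((x-1)^2+D) = (2*x-1) * ((x^2-x+D)/((x^2-x+D)^2+D)) := by
  have h1 : (0:ℝ) < x^2+D := by positivity
  have h2 : (0:ℝ) < (x-1)^2+D := by positivity
  have h3 : (0:ℝ) < (x^2-x+D)^2+D := by positivity
  field_simp
  ring

lemma Sigk_eq (k : ℕ) (σ t : ℝ) (hD : 0 < (k:ℝ)^2 * t^2) :
    Sigk k σ t = FF σ ((k:ℝ)^2 * t^2) := by
  have key1 := L1 σ ((k:ℝ)^2 * t^2) hD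
  have key2 := L1 (σ₁ σ) ((k:ℝ)^2 * t^2) hD
  have e : (σ₁ σ)^2 - σ₁ σ = σ^2 := by have := sigma1_sq σ; linarith
  rw [e] at key2
  unfold Sigk FF rr
  rw [show σ / (σ ^ 2 + (k:ℝ) ^ 2 * t ^ 2) + (σ - 1) / ((σ - 1) ^ 2 + (k:ℝ) ^ 2 * t ^ 2) -
    κ * σ₁ σ / ((σ₁ σ) ^ 2 + (k:ℝ) ^ 2 * t ^ 2) -
    κ * (σ₁ σ - 1) / ((σ₁ σ - 1) ^ 2 + (k:ℝ) ^ 2 * t ^ 2)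
    = (σ / (σ ^ 2 + (k:ℝ) ^ 2 * t ^ 2) + (σ - 1) / ((σ - 1) ^ 2 + (k:ℝ) ^ 2 * t ^ 2))
      - κ * (σ₁ σ / ((σ₁ σ) ^ 2 + (k:ℝ) ^ 2 * t ^ 2) +
        (σ₁ σ - 1) / ((σ₁ σ - 1) ^ 2 + (k:ℝ) ^ 2 * t ^ 2)) from by ring]
  rw [key1, key2]
  ring

-- σ-monotonicity : claim 1 (the subtracted part)
lemma claim1 (σ D : ℝ) (h1 : 1 ≤ σ) (h2 : σ ≤ 1.01) (hD : 1 ≤ D) :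
    rr 1.01 * ((1.01^2+D)/((1.01^2+D)^2+D)) ≤
      rr σ * ((σ^2+D)/((σ^2+D)^2+D)) + 0.808*(1.01-σ)*((σ^2+D)/((σ^2+D)^2+D)) := by
  have hD0 : (0:ℝ) < D := by linarith
  have hq : 1 ≤ σ^2 := by nlinarith
  have hq' : σ^2 ≤ 1.0201 := by nlinarith
  have hdV : (0:ℝ) < (σ^2+D)^2+D := by positivity
  have hdV2 : (0:ℝ) < (1.01^2+D)^2+D := by positivity
  have hA : (0:ℝ) ≤ (σ^2+D)/((σ^2+D)^2+D) := by positivity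
  have hr1 := rr_ge_one σ h1
  have hr2 := rr_ge_one 1.01 (by norm_num)
  have hr2pos : (0:ℝ) ≤ rr 1.01 := by linarith
  -- (a) V-fraction is antitone in σ
  have hVmono : (1.01^2+D)/((1.01^2+D)^2+D) ≤ (σ^2+D)/((σ^2+D)^2+D) := by
    rw [div_le_div_iff₀ hdV2 hdV]
    have hfac : (0:ℝ) ≤ (1.0201-σ^2)*((σ^2+D)*(1.0201+D)-D) := by
      apply mul_nonneg (by linarith)
      nlinarith
    nlinarith [hfac]
  -- (b) rr 1.01 ≤ rr σ + 0.808 (1.01-σ)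
  have hrb : rr 1.01 ≤ rr σ + 0.808*(1.01-σ) := by
    have hs1 := rr_sq σ
    have hs2 := rr_sq 1.01
    have hδ : (0:ℝ) ≤ 1.01 - σ := by linarith
    have hsum : (0:ℝ) ≤ rr σ + rr 1.01 - 2 := by linarith
    nlinarith [mul_nonneg hδ hsum, mul_nonneg hδ hδ, sq_nonneg (rr 1.01 - rr σ)]
  calc rr 1.01 * ((1.01^2+D)/((1.01^2+D)^2+D))
      ≤ rr 1.01 * ((σ^2+D)/((σ^2+D)^2+D)) := by
        exact mul_le_mul_of_nonneg_left hVmono hr2pos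
    _ ≤ (rr σ + 0.808*(1.01-σ)) * ((σ^2+D)/((σ^2+D)^2+D)) := by
        exact mul_le_mul_of_nonneg_right hrb hA
    _ = rr σ * ((σ^2+D)/((σ^2+D)^2+D)) + 0.808*(1.01-σ)*((σ^2+D)/((σ^2+D)^2+D)) := by ring

-- coreC : single-variable polynomial inequality, D ≥ 1
lemma coreC (D : ℝ) (hD : 1 ≤ D) :
    0.808*(D+1.0201)*(((D+0.0101)^2+D)*((D+0.0101)^2+D)) ≤
      (2*D*(D^2+D) - 1.0404*((D+0.0101)*(D+0.0101)) + 1.0404*D)*((1+D)^2+D) := by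
  have hx : (0:ℝ) ≤ D - 1 := by linarith
  have h2 : (0:ℝ) ≤ (D-1)^2 := by positivity
  have h3 : (0:ℝ) ≤ (D-1)^3 := by positivity
  have h4 : (0:ℝ) ≤ (D-1)^4 := by positivity
  have h5 : (0:ℝ) ≤ (D-1)^5 := by positivity
  have key : (2*D*(D^2+D) - 1.0404*((D+0.0101)*(D+0.0101)) + 1.0404*D)*((1+D)^2+D)
      - 0.808*(D+1.0201)*(((D+0.0101)^2+D)*((D+0.0101)^2+D))
      = (165402523806068235739299/12500000000000000000000:ℝ)
        + (10342604844056415419/250000000000000000:ℝ)*(D-1)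
        + (651569057239489/12500000000000:ℝ)*(D-1)^2
        + (41552661559/1250000000:ℝ)*(D-1)^3
        + (2611679/250000:ℝ)*(D-1)^4 + (149/125:ℝ)*(D-1)^5 := by ring
  linarith [key, hx, h2, h3, h4, h5]

-- claim2 : the increase of the positive part dominates 0.808 (1.01-σ) v/(v²+D)
lemma claim2 (σ D : ℝ) (h1 : 1 ≤ σ) (h2 : σ ≤ 1.01) (hD : 1 ≤ D) :
    (2*σ-1)*((σ^2-σ+D)/((σ^2-σ+D)^2+D)) + 0.808*(1.01-σ)*((σ^2+D)/((σ^2+D)^2+D))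
      ≤ 1.02*((1.01^2-1.01+D)/((1.01^2-1.01+D)^2+D)) := by
  have hD0 : (0:ℝ) < D := by linarith
  have hσ0 : (0:ℝ) ≤ σ := by linarith
  have hp : (0:ℝ) ≤ σ^2 - σ := by
    have := mul_nonneg (by linarith : (0:ℝ) ≤ σ-1) hσ0; linarith [this]
  have hp' : σ^2 - σ ≤ 0.0101 := by
    have := mul_nonneg (by linarith : (0:ℝ) ≤ 1.01-σ) (by linarith : (0:ℝ) ≤ σ+0.01)
    linarith [this]
  have hq : 1 ≤ σ^2 := by
    have := mul_le_mul h1 h1 (by norm_num) hσ0; linarith [this]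
  have hq' : σ^2 ≤ 1.0201 := by
    have := mul_nonneg (by linarith : (0:ℝ) ≤ 1.01-σ) (by linarith : (0:ℝ) ≤ 1.01+σ)
    linarith [this]
  have hδ : (0:ℝ) ≤ 1.01 - σ := by linarith
  have hdU : (0:ℝ) < (σ^2-σ+D)^2+D := by positivity
  have hdU2 : (0:ℝ) < (1.01^2-1.01+D)^2+D := by positivity
  have hdV : (0:ℝ) < (σ^2+D)^2+D := by positivity
  have hUpos : (0:ℝ) < σ^2-σ+D := by linarith
  have hU2pos : (0:ℝ) < 1.01^2-1.01+D := by norm_num; linarith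
  have hVpos : (0:ℝ) < σ^2+D := by linarith
  -- step A : N1 ≥ δ * M'
  have hstepA : (1.01-σ)*(2*(1.01^2-1.01+D)*((σ^2-σ+D)^2+D)
        - 1.0404*((σ^2-σ+D)*(1.01^2-1.01+D)-D))
      ≤ 1.02*(1.01^2-1.01+D)*((σ^2-σ+D)^2+D)
        - (2*σ-1)*(σ^2-σ+D)*((1.01^2-1.01+D)^2+D) := by
    have hc1 : (0:ℝ) ≤ 1.0404 - (2*σ-1)*(σ+0.01) := by
      have := mul_nonneg hδ (by linarith : (0:ℝ) ≤ σ+0.52); linarith [this]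
    have hW : (0:ℝ) ≤ (σ^2-σ+D)*(1.01^2-1.01+D) - D := by
      linarith [mul_nonneg hp hD0.le, mul_nonneg (sub_nonneg.2 hD) hD0.le, hp]
    have hprod := mul_nonneg (mul_nonneg hc1 hδ) hW
    rw [← sub_nonneg]
    rw [show 1.02*(1.01^2-1.01+D)*((σ^2-σ+D)^2+D)
        - (2*σ-1)*(σ^2-σ+D)*((1.01^2-1.01+D)^2+D)
      - (1.01-σ)*(2*(1.01^2-1.01+D)*((σ^2-σ+D)^2+D)
        - 1.0404*((σ^2-σ+D)*(1.01^2-1.01+D)-D))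
      = (1.0404 - (2*σ-1)*(σ+0.01))*(1.01-σ)*((σ^2-σ+D)*(1.01^2-1.01+D)-D) from by ring]
    exact hprod
  -- step B : M' * dV ≥ 0.808 V dU dU2
  have hstepB : 0.808*(σ^2+D)*(((σ^2-σ+D)^2+D)*((1.01^2-1.01+D)^2+D))
      ≤ (2*(1.01^2-1.01+D)*((σ^2-σ+D)^2+D)
          - 1.0404*((σ^2-σ+D)*(1.01^2-1.01+D)-D))*((σ^2+D)^2+D) := by
    have hU' : σ^2-σ+D ≤ D+0.0101 := by linarith
    have hdUhi : (σ^2-σ+D)^2+D ≤ (D+0.0101)^2+D := by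
      have := mul_le_mul hU' hU' hUpos.le (by linarith : (0:ℝ) ≤ D+0.0101)
      linarith [this]
    have hdU2eq : (1.01^2-1.01+D)^2+D = (D+0.0101)^2+D := by ring
    have hV' : σ^2+D ≤ D+1.0201 := by linarith
    -- bound the RHS-of-goal's LHS product
    have t1 : (σ^2+D)*((σ^2-σ+D)^2+D) ≤ (D+1.0201)*((D+0.0101)^2+D) :=
      mul_le_mul hV' hdUhi hdU.le (by linarith)
    have t2 : (σ^2+D)*((σ^2-σ+D)^2+D)*((1.01^2-1.01+D)^2+D)
        ≤ ((D+1.0201)*((D+0.0101)^2+D))*((D+0.0101)^2+D) := by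
      rw [hdU2eq]
      apply mul_le_mul_of_nonneg_right t1 (by positivity)
    -- the single-variable core bound
    have hcore := coreC D hD
    -- m ≤ M'
    have hDsq : D^2 + D ≤ (σ^2-σ+D)^2+D := by
      have := mul_le_mul (by linarith : D ≤ σ^2-σ+D) (by linarith : D ≤ σ^2-σ+D) hD0.le hUpos.le
      linarith [this]
    have hm : 2*D*(D^2+D) - 1.0404*((D+0.0101)*(D+0.0101)) + 1.0404*D
        ≤ 2*(1.01^2-1.01+D)*((σ^2-σ+D)^2+D)
          - 1.0404*((σ^2-σ+D)*(1.01^2-1.01+D)-D) := by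
      have e1 : (2*D)*(D^2+D) ≤ (2*(1.01^2-1.01+D))*((σ^2-σ+D)^2+D) := by
        apply mul_le_mul (by norm_num) hDsq (by positivity) (by linarith)
      have e2 : (σ^2-σ+D)*(1.01^2-1.01+D) ≤ (D+0.0101)*(D+0.0101) := by
        linarith [mul_le_mul_of_nonneg_right hU' hU2pos.le]
      linarith [e1, e2]
    have hmpos : (0:ℝ) < 2*D*(D^2+D) - 1.0404*((D+0.0101)*(D+0.0101)) + 1.0404*D := by
      have hx : (0:ℝ) ≤ D-1 := by linarith
      linarith [mul_nonneg (mul_nonneg hx hx) hx, mul_nonneg hx hx, hx]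
    have hdVlo : (1+D)^2+D ≤ (σ^2+D)^2+D := by
      have := mul_le_mul (by linarith : 1+D ≤ σ^2+D) (by linarith : 1+D ≤ σ^2+D)
        (by linarith : (0:ℝ) ≤ 1+D) hVpos.le
      linarith [this]
    have t3 : (2*D*(D^2+D) - 1.0404*((D+0.0101)*(D+0.0101)) + 1.0404*D)*((1+D)^2+D)
        ≤ (2*(1.01^2-1.01+D)*((σ^2-σ+D)^2+D)
            - 1.0404*((σ^2-σ+D)*(1.01^2-1.01+D)-D))*((σ^2+D)^2+D) :=
      mul_le_mul hm hdVlo (by positivity) (by linarith)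
    calc 0.808*(σ^2+D)*(((σ^2-σ+D)^2+D)*((1.01^2-1.01+D)^2+D))
        = 0.808*((σ^2+D)*((σ^2-σ+D)^2+D)*((1.01^2-1.01+D)^2+D)) := by ring
      _ ≤ 0.808*(((D+1.0201)*((D+0.0101)^2+D))*((D+0.0101)^2+D)) := by
          have := mul_le_mul_of_nonneg_left t2 (by norm_num : (0:ℝ) ≤ 0.808)
          linarith [this]
      _ = 0.808*(D+1.0201)*(((D+0.0101)^2+D)*((D+0.0101)^2+D)) := by ring
      _ ≤ (2*D*(D^2+D) - 1.0404*((D+0.0101)*(D+0.0101)) + 1.0404*D)*((1+D)^2+D) := hcore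
      _ ≤ (2*(1.01^2-1.01+D)*((σ^2-σ+D)^2+D)
          - 1.0404*((σ^2-σ+D)*(1.01^2-1.01+D)-D))*((σ^2+D)^2+D) := t3
  -- combine via a single fraction identity
  have key : 1.02*((1.01^2-1.01+D)/((1.01^2-1.01+D)^2+D))
      - ((2*σ-1)*((σ^2-σ+D)/((σ^2-σ+D)^2+D)) + 0.808*(1.01-σ)*((σ^2+D)/((σ^2+D)^2+D)))
      = ((1.02*(1.01^2-1.01+D)*((σ^2-σ+D)^2+D)
          - (2*σ-1)*(σ^2-σ+D)*((1.01^2-1.01+D)^2+D))*((σ^2+D)^2+D)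
         - 0.808*(1.01-σ)*(σ^2+D)*(((σ^2-σ+D)^2+D)*((1.01^2-1.01+D)^2+D)))
        / (((σ^2-σ+D)^2+D)*((1.01^2-1.01+D)^2+D)*((σ^2+D)^2+D)) := by
    field_simp
    ring
  have hnum : (0:ℝ) ≤ (1.02*(1.01^2-1.01+D)*((σ^2-σ+D)^2+D)
          - (2*σ-1)*(σ^2-σ+D)*((1.01^2-1.01+D)^2+D))*((σ^2+D)^2+D)
         - 0.808*(1.01-σ)*(σ^2+D)*(((σ^2-σ+D)^2+D)*((1.01^2-1.01+D)^2+D)) := by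
    have f1 : (1.01-σ)*(2*(1.01^2-1.01+D)*((σ^2-σ+D)^2+D)
          - 1.0404*((σ^2-σ+D)*(1.01^2-1.01+D)-D))*((σ^2+D)^2+D)
        ≤ (1.02*(1.01^2-1.01+D)*((σ^2-σ+D)^2+D)
          - (2*σ-1)*(σ^2-σ+D)*((1.01^2-1.01+D)^2+D))*((σ^2+D)^2+D) :=
      mul_le_mul_of_nonneg_right hstepA hdV.le
    have f2 : (1.01-σ)*(0.808*(σ^2+D)*(((σ^2-σ+D)^2+D)*((1.01^2-1.01+D)^2+D)))
        ≤ (1.01-σ)*((2*(1.01^2-1.01+D)*((σ^2-σ+D)^2+D)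
          - 1.0404*((σ^2-σ+D)*(1.01^2-1.01+D)-D))*((σ^2+D)^2+D)) :=
      mul_le_mul_of_nonneg_left hstepB hδ
    refine sub_nonneg.2 ?_
    calc 0.808*(1.01-σ)*(σ^2+D)*(((σ^2-σ+D)^2+D)*((1.01^2-1.01+D)^2+D))
        = (1.01-σ)*(0.808*(σ^2+D)*(((σ^2-σ+D)^2+D)*((1.01^2-1.01+D)^2+D))) := by ring
      _ ≤ (1.01-σ)*((2*(1.01^2-1.01+D)*((σ^2-σ+D)^2+D)
          - 1.0404*((σ^2-σ+D)*(1.01^2-1.01+D)-D))*((σ^2+D)^2+D)) := f2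
      _ = ((1.01-σ)*(2*(1.01^2-1.01+D)*((σ^2-σ+D)^2+D)
          - 1.0404*((σ^2-σ+D)*(1.01^2-1.01+D)-D)))*((σ^2+D)^2+D) := by ring
      _ ≤ (1.02*(1.01^2-1.01+D)*((σ^2-σ+D)^2+D)
          - (2*σ-1)*(σ^2-σ+D)*((1.01^2-1.01+D)^2+D))*((σ^2+D)^2+D) := f1
  have hpos : (0:ℝ) < ((σ^2-σ+D)^2+D)*((1.01^2-1.01+D)^2+D)*((σ^2+D)^2+D) := by positivity
  rw [← sub_nonneg, key]
  exact div_nonneg hnum hpos.le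

lemma mono_sigma (σ D : ℝ) (h1 : 1 ≤ σ) (h2 : σ ≤ 1.01) (hD : 1 ≤ D) :
    FF σ D ≤ FF 1.01 D := by
  unfold FF
  linarith [claim1 σ D h1 h2 hD, claim2 σ D h1 h2 hD]

lemma coreB (D₀ D : ℝ) (h1 : 1 ≤ D₀) (h2 : D₀ ≤ D) :
    1.0080079365*(((D₀+1.0201)*(D+1.0201)+1.0201)*(((D₀+0.0101)^2+D₀)*((D+0.0101)^2+D)))
      ≤ 1.02*(((D₀+0.0101)*(D+0.0101)+0.0101)*(((D₀+1.0201)^2+D₀)*((D+1.0201)^2+D))) := by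
  have hx : (0:ℝ) ≤ D₀-1 := by linarith
  have hy : (0:ℝ) ≤ D-D₀ := by linarith
  have key : 1.02*(((D₀+0.0101)*(D+0.0101)+0.0101)*(((D₀+1.0201)^2+D₀)*((D+1.0201)^2+D)))
      - 1.0080079365*(((D₀+1.0201)*(D+1.0201)+1.0201)*(((D₀+0.0101)^2+D₀)*((D+0.0101)^2+D)))
      = (12289388205828919849385156609735727/2000000000000000000000000000000000:ℝ)
        + (2765306355493227791354457456381/200000000000000000000000000000:ℝ)*(D-D₀)
        + (178231033117117762760785581/20000000000000000000000000:ℝ)*(D-D₀)^2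
        + (2241736710894113064927/2000000000000000000000:ℝ)*(D-D₀)^3
        + (2765306355493227791354457456381/100000000000000000000000000000:ℝ)*(D₀-1)
        + (191028017039041821351655581/4000000000000000000000000:ℝ)*(D₀-1)*(D-D₀)
        + (10910394227239419869781/500000000000000000000:ℝ)*(D₀-1)*(D-D₀)^2
        + (437780896161033981/200000000000000000:ℝ)*(D₀-1)*(D-D₀)^3
        + (191028017039041821351655581/4000000000000000000000000:ℝ)*(D₀-1)^2
        + (11747431046150836004781/200000000000000000000:ℝ)*(D₀-1)^2*(D-D₀)
        + (1727893653167276943/100000000000000000:ℝ)*(D₀-1)^2*(D-D₀)^2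
        + (21812871953181/20000000000000:ℝ)*(D₀-1)^2*(D-D₀)^3
        + (3915810348716945334927/100000000000000000000:ℝ)*(D₀-1)^3
        + (603601282034703981/20000000000000000:ℝ)*(D₀-1)^3*(D-D₀)
        + (21812871953181/5000000000000:ℝ)*(D₀-1)^3*(D-D₀)^2
        + (23984127/2000000000:ℝ)*(D₀-1)^3*(D-D₀)^3
        + (603601282034703981/40000000000000000:ℝ)*(D₀-1)^4
        + (21812871953181/4000000000000:ℝ)*(D₀-1)^4*(D-D₀)
        + (71952381/2000000000:ℝ)*(D₀-1)^4*(D-D₀)^2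
        + (21812871953181/10000000000000:ℝ)*(D₀-1)^5
        + (71952381/2000000000:ℝ)*(D₀-1)^5*(D-D₀)
        + (23984127/2000000000:ℝ)*(D₀-1)^6 := by ring
  have m00 : (0:ℝ) ≤ (D₀-1)*(D-D₀) := mul_nonneg hx hy
  linarith [key, hx, hy, m00,
    pow_nonneg hy 2,
    pow_nonneg hy 3,
    mul_nonneg hx (pow_nonneg hy 2),
    mul_nonneg hx (pow_nonneg hy 3),
    pow_nonneg hx 2,
    mul_nonneg (pow_nonneg hx 2) hy,
    mul_nonneg (pow_nonneg hx 2) (pow_nonneg hy 2),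
    mul_nonneg (pow_nonneg hx 2) (pow_nonneg hy 3),
    pow_nonneg hx 3,
    mul_nonneg (pow_nonneg hx 3) hy,
    mul_nonneg (pow_nonneg hx 3) (pow_nonneg hy 2),
    mul_nonneg (pow_nonneg hx 3) (pow_nonneg hy 3),
    pow_nonneg hx 4,
    mul_nonneg (pow_nonneg hx 4) hy,
    mul_nonneg (pow_nonneg hx 4) (pow_nonneg hy 2),
    pow_nonneg hx 5,
    mul_nonneg (pow_nonneg hx 5) hy,
    pow_nonneg hx 6]

lemma mono_D (D₀ D : ℝ) (h1 : 1 ≤ D₀) (h2 : D₀ ≤ D) : FF 1.01 D ≤ FF 1.01 D₀ := by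
  have hD0 : (0:ℝ) < D₀ := by linarith
  have hDp : (0:ℝ) < D := by linarith
  have hdU0 : (0:ℝ) < (1.01^2-1.01+D₀)^2+D₀ := by positivity
  have hdU : (0:ℝ) < (1.01^2-1.01+D)^2+D := by positivity
  have hdV0 : (0:ℝ) < (1.01^2+D₀)^2+D₀ := by positivity
  have hdV : (0:ℝ) < (1.01^2+D)^2+D := by positivity
  rw [← sub_nonneg]
  unfold FF
  have key : (2*1.01-1) * ((1.01^2-1.01+D₀)/((1.01^2-1.01+D₀)^2+D₀))
        - rr 1.01 * ((1.01^2+D₀)/((1.01^2+D₀)^2+D₀))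
      - ((2*1.01-1) * ((1.01^2-1.01+D)/((1.01^2-1.01+D)^2+D))
        - rr 1.01 * ((1.01^2+D)/((1.01^2+D)^2+D)))
      = ((D-D₀) * (1.02*(((1.01^2-1.01+D₀)*(1.01^2-1.01+D)+0.0101)
            *(((1.01^2+D₀)^2+D₀)*((1.01^2+D)^2+D)))
          - rr 1.01*(((1.01^2+D₀)*(1.01^2+D)+1.0201)
            *(((1.01^2-1.01+D₀)^2+D₀)*((1.01^2-1.01+D)^2+D)))))
        / ((((1.01^2-1.01+D₀)^2+D₀)*((1.01^2-1.01+D)^2+D))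
            *(((1.01^2+D₀)^2+D₀)*((1.01^2+D)^2+D))) := by
    field_simp
    ring
  rw [key]
  apply div_nonneg _ (by positivity)
  apply mul_nonneg (by linarith)
  have h3 : (0:ℝ) ≤ ((1.01^2+D₀)*(1.01^2+D)+1.0201)
      *(((1.01^2-1.01+D₀)^2+D₀)*((1.01^2-1.01+D)^2+D)) := by positivity
  have h4 := mul_le_mul_of_nonneg_right r2_le h3
  have hcore := coreB D₀ D h1 h2
  nlinarith [h4, hcore]

lemma FF_le (D b : ℝ) (hD : 0 < D)
    (h : 1.02*((1.01^2-1.01+D)*((1.01^2+D)^2+D))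
        - 1.0080079364*((1.01^2+D)*((1.01^2-1.01+D)^2+D))
      ≤ b*(((1.01^2-1.01+D)^2+D)*((1.01^2+D)^2+D))) :
    FF 1.01 D ≤ b := by
  have hdU2 : (0:ℝ) < (1.01^2-1.01+D)^2+D := by positivity
  have hdV2 : (0:ℝ) < (1.01^2+D)^2+D := by positivity
  have hB : (0:ℝ) ≤ (1.01^2+D)/((1.01^2+D)^2+D) := by positivity
  have h4 := mul_le_mul_of_nonneg_right r2_ge hB
  unfold FF
  have key : (2*1.01-1)*((1.01^2-1.01+D)/((1.01^2-1.01+D)^2+D))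
      - 1.0080079364*((1.01^2+D)/((1.01^2+D)^2+D))
      = (1.02*((1.01^2-1.01+D)*((1.01^2+D)^2+D))
          - 1.0080079364*((1.01^2+D)*((1.01^2-1.01+D)^2+D)))
        / (((1.01^2-1.01+D)^2+D)*((1.01^2+D)^2+D)) := by
    field_simp
    ring
  have h5 : (1.02*((1.01^2-1.01+D)*((1.01^2+D)^2+D))
          - 1.0080079364*((1.01^2+D)*((1.01^2-1.01+D)^2+D)))
        / (((1.01^2-1.01+D)^2+D)*((1.01^2+D)^2+D)) ≤ b := by
    rw [div_le_iff₀ (by positivity)]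
    linarith [h]
  linarith [key, h4, h5]

lemma master (σ t : ℝ) (hσ : 1 ≤ σ) (hσ' : σ ≤ 1.01) (ht : 1 ≤ t) (k : ℕ) (hk : 1 ≤ k) :
    Sigk k σ t ≤ FF 1.01 ((k:ℝ)^2) := by
  have hk1 : (1:ℝ) ≤ (k:ℝ) := by exact_mod_cast hk
  have hk2 : (1:ℝ) ≤ (k:ℝ)^2 := by nlinarith [mul_le_mul hk1 hk1 (by norm_num : (0:ℝ) ≤ 1) (by linarith : (0:ℝ) ≤ (k:ℝ))]
  have ht2 : (1:ℝ) ≤ t^2 := by nlinarith [mul_le_mul ht ht (by norm_num : (0:ℝ) ≤ 1) (by linarith : (0:ℝ) ≤ t)]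
  have hD1 : (1:ℝ) ≤ (k:ℝ)^2*t^2 := by nlinarith [mul_le_mul hk2 ht2 (by norm_num : (0:ℝ) ≤ 1) (by positivity : (0:ℝ) ≤ (k:ℝ)^2)]
  have hD0 : (0:ℝ) < (k:ℝ)^2*t^2 := by linarith
  have hDk : (k:ℝ)^2 ≤ (k:ℝ)^2*t^2 := by
    nlinarith [mul_le_mul_of_nonneg_left ht2 (by positivity : (0:ℝ) ≤ (k:ℝ)^2)]
  rw [Sigk_eq k σ t hD0]
  calc FF σ ((k:ℝ)^2*t^2) ≤ FF 1.01 ((k:ℝ)^2*t^2) := mono_sigma σ _ hσ hσ' hD1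
    _ ≤ FF 1.01 ((k:ℝ)^2) := mono_D ((k:ℝ)^2) _ hk2 hDk

end SigkAux

/-- For `1 < σ ≤ 1.01`, `t ≥ 1` and `1 ≤ k ≤ 16`, `Σ_k(σ,t) ≤ 𝓑_{0.01}(k)`. -/
theorem Sigk_le_B001 (σ t : ℝ) (hσ : 1 < σ) (hσ' : σ ≤ 1.01) (ht : 1 ≤ t) :
    ∀ k : ℕ, 1 ≤ k → k ≤ 16 → Sigk k σ t ≤ B001 k := by
  intro k hk1 hk2
  have H := master σ t hσ.le hσ' ht k hk1
  interval_cases k <;>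
    refine le_trans H (FF_le _ _ (by positivity) ?_) <;>
    push_cast <;> norm_num [B001]
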